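/- Along a trajectory z(t) in Δ_n of the replicator-type dynamics ż_i = z_i g_i(z), the time derivative of f ∘ z vanishes at time t if and only if ż(t) = 0, i.e., z_i(t)·(∂f/∂z_i(z(t)) − μ(t)) = 0 for all i, where μ(t) = Σ_k z_k(t) ∂f/∂z_k(z(t)). -/

import Mathlib

open Real BigOperators Finset

noncomputable def pd {n : ℕ} (f : (Fin n → ℝ) → ℝ) (z : Fin n → ℝ) (i : Fin n) : ℝ :=
  fderiv ℝ f z (Pi.single i 1)

theorem stmt2 {n : ℕ} (Ω : Set (Fin n → ℝ)) (hΩ : IsOpen Ω)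
    (hsub : stdSimplex ℝ (Fin n) ⊆ Ω) (f : (Fin n → ℝ) → ℝ)
    (hf : ContDiffOn ℝ 1 f Ω)
    (z : ℝ → Fin n → ℝ) (hmem : ∀ t, z t ∈ stdSimplex ℝ (Fin n))
    (hode : ∀ t i, HasDerivAt (fun s => z s i)
      (z t i * (pd f (z t) i - ∑ k, z t k * pd f (z t) k)) t)
    (t : ℝ) (d : ℝ) (hd : HasDerivAt (fun s => f (z s)) d t) :
    d = 0 ↔ ∀ i, z t i * (pd f (z t) i - ∑ k, z t k * pd f (z t) k) = 0 := by
  set p : Fin n → ℝ := pd f (z t) with hp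
  set μ : ℝ := ∑ k, z t k * p k with hμ
  set v : Fin n → ℝ := fun i => z t i * (p i - μ) with hv
  have hzmem := hmem t
  have hnonneg : ∀ i, 0 ≤ z t i := hzmem.1
  have hsum1 : ∑ i, z t i = 1 := hzmem.2
  have hdiff : DifferentiableAt ℝ f (z t) :=
    ((hf.contDiffAt (hΩ.mem_nhds (hsub hzmem))).differentiableAt one_ne_zero)
  have hz : HasDerivAt z v t := hasDerivAt_pi.mpr (fun i => hode t i)
  have hchain : HasDerivAt (fun s => f (z s)) (fderiv ℝ f (z t) v) t :=
    hdiff.hasFDerivAt.comp_hasDerivAt t hz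
  have hd' : d = fderiv ℝ f (z t) v := hd.unique hchain
  have hvdec : v = ∑ i, v i • (Pi.single i 1 : Fin n → ℝ) := by
    funext j
    simp [Finset.sum_apply, Pi.single_apply, mul_comm]
  have hdsum : d = ∑ i, v i * p i := by
    have key : fderiv ℝ f (z t) v = ∑ i, v i * p i := by
      conv_lhs => rw [hvdec]
      rw [map_sum]
      exact Finset.sum_congr rfl fun i _ => by rw [map_smul]; simp [hp, pd, smul_eq_mul]
    rw [hd', key]
  -- Σ v_i = 0
  have hvsum : ∑ i, v i = 0 := by
    simp only [hv, mul_sub]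
    rw [Finset.sum_sub_distrib, ← Finset.sum_mul, hsum1, one_mul, hμ, sub_self]
  have hdsq : d = ∑ i, z t i * (p i - μ) ^ 2 := by
    rw [hdsum]
    have : ∀ i, v i * p i = z t i * (p i - μ) ^ 2 + v i * μ := by
      intro i; simp only [hv]; ring
    rw [Finset.sum_congr rfl fun i _ => this i, Finset.sum_add_distrib,
      ← Finset.sum_mul, hvsum, zero_mul, add_zero]
  rw [hdsq]
  constructor
  · intro h i
    have hterm : ∀ i ∈ Finset.univ, (0:ℝ) ≤ z t i * (p i - μ) ^ 2 :=
      fun i _ => mul_nonneg (hnonneg i) (sq_nonneg _)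
    have := (Finset.sum_eq_zero_iff_of_nonneg hterm).mp h i (Finset.mem_univ i)
    rcases mul_eq_zero.mp this with h0 | h0
    · simp [h0]
    · have : p i - μ = 0 := pow_eq_zero_iff (by norm_num) |>.mp h0
      simp [this]
  · intro h
    refine Finset.sum_eq_zero fun i _ => ?_
    have : z t i * (p i - μ) ^ 2 = (z t i * (p i - μ)) * (p i - μ) := by ring
    rw [this, h i, zero_mul]
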